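/- Let Y be a nonempty finite set and π : ℝⁿ → (Y → ℝ) a parameterized family of probability distributions such that for each y ∈ Y the map θ ↦ π(θ)(y) is differentiable at θ₀, π(θ₀)(y) > 0 for all y, and Σ_{y∈Y} π(θ)(y) = 1 for all θ. Fix y_w, y_l ∈ Y with ⟨∇log π(y_w), ∇log π(y_l)⟩ ≤ 0 (gradient-alignment condition), and constants c₁ ≥ 0, c₂ ≥ 0. Let v = c₁·∇log π(y_w) − c₂·∇log π(y_l) and v₀ = c₁·∇log π(y_w). Then: (i) the derivative at t = 0 of t ↦ log π(θ₀ + t·v)(y_w) is greater than or equal to the derivative at t = 0 of t ↦ log π(θ₀ + t·v₀)(y_w); and (ii) the derivative at t = 0 of t ↦ log π(θ₀ + t·v)(y_l) is less than or equal to the derivative at t = 0 of t ↦ log π(θ₀ + t·v₀)(y_l). That is, under nonpositive gradient alignment, the negative-gradient term increases the instantaneous rate of the preferred response's log-likelihood and decreases that of the dispreferred response (second conclusion of Lemma 2). -/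

import Mathlib

open scoped BigOperators RealInnerProductSpace

lemma deriv_along_line {n : ℕ} (f : EuclideanSpace ℝ (Fin n) → ℝ)
    (x u : EuclideanSpace ℝ (Fin n)) (hf : DifferentiableAt ℝ f x) :
    deriv (fun t : ℝ => f (x + t • u)) 0 = ⟪gradient f x, u⟫ := by
  have hc : HasDerivAt (fun t : ℝ => x + t • u) u 0 := by
    simpa using ((hasDerivAt_id (0:ℝ)).smul_const u).const_add x
  have hg := hf.hasGradientAt
  rw [hasGradientAt_iff_hasFDerivAt] at hg
  rw [show x = x + (0:ℝ) • u by simp] at hg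
  have h := hg.comp_hasDerivAt (x := (0:ℝ)) hc
  simpa [InnerProductSpace.toDual_apply_apply, Function.comp_def] using h.deriv

/-- second conclusion of Lemma 2: under nonpositive gradient
alignment `⟨∇log π(y_w), ∇log π(y_l)⟩ ≤ 0` and `c₁, c₂ ≥ 0`, relative to the
direction `v₀ = c₁·∇log π(y_w)`, the negative-gradient direction
`v = c₁·∇log π(y_w) − c₂·∇log π(y_l)` (i) does not decrease the instantaneous
rate of the preferred response's log-likelihood and (ii) does not increase that
of the dispreferred response. -/
theorem negative_gradient_helps_under_alignment
    {n : ℕ} {Y : Type*} [Fintype Y] [Nonempty Y]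
    (π : EuclideanSpace ℝ (Fin n) → Y → ℝ) (θ₀ : EuclideanSpace ℝ (Fin n))
    (hdiff : ∀ y, DifferentiableAt ℝ (fun θ => π θ y) θ₀)
    (hpos : ∀ y, 0 < π θ₀ y)
    (hsum : ∀ θ, ∑ y, π θ y = 1)
    (y_w y_l : Y) (c₁ c₂ : ℝ) (hc₁ : 0 ≤ c₁) (hc₂ : 0 ≤ c₂)
    (gw gl v v₀ : EuclideanSpace ℝ (Fin n))
    (hgw : gw = gradient (fun θ => Real.log (π θ y_w)) θ₀)
    (hgl : gl = gradient (fun θ => Real.log (π θ y_l)) θ₀)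
    (halign : ⟪gw, gl⟫ ≤ 0)
    (hv : v = c₁ • gw - c₂ • gl) (hv₀ : v₀ = c₁ • gw) :
    (deriv (fun t : ℝ => Real.log (π (θ₀ + t • v) y_w)) 0 ≥
      deriv (fun t : ℝ => Real.log (π (θ₀ + t • v₀) y_w)) 0) ∧
    (deriv (fun t : ℝ => Real.log (π (θ₀ + t • v) y_l)) 0 ≤
      deriv (fun t : ℝ => Real.log (π (θ₀ + t • v₀) y_l)) 0) := by
  have hdw : DifferentiableAt ℝ (fun θ => Real.log (π θ y_w)) θ₀ :=
    (hdiff y_w).log (hpos y_w).ne'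
  have hdl : DifferentiableAt ℝ (fun θ => Real.log (π θ y_l)) θ₀ :=
    (hdiff y_l).log (hpos y_l).ne'
  have e1 := deriv_along_line _ θ₀ v hdw
  have e2 := deriv_along_line _ θ₀ v₀ hdw
  have e3 := deriv_along_line _ θ₀ v hdl
  have e4 := deriv_along_line _ θ₀ v₀ hdl
  rw [← hgw] at e1 e2; rw [← hgl] at e3 e4
  rw [e1, e2, e3, e4, hv, hv₀]
  have hsym : ⟪gl, gw⟫ = ⟪gw, gl⟫ := real_inner_comm _ _
  constructor
  · rw [inner_sub_right, inner_smul_right, inner_smul_right]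
    nlinarith [real_inner_self_nonneg (x := gw)]
  · rw [inner_sub_right, inner_smul_right, inner_smul_right, hsym]
    nlinarith [real_inner_self_nonneg (x := gl)]
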